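/- For t ≥ s in [0,1], n ∈ ℕ, and N ≤ ⌊ns⌋, one has 0 ≤ E[(B^{H,n}_t)²]^N + E[(B^{H,n}_s)²]^N − 2E[B^{H,n}_t B^{H,n}_s]^N − (1/N!)E[((B^{H,n}_t)^{⋄ₙN} − (B^{H,n}_s)^{⋄ₙN})²] ≤ 2c_H² N² t^{2H(N−1)} n^{−(2−2H)}. -/

import Mathlib

set_option linter.unusedSectionVars false
set_option linter.unreachableTactic false
set_option linter.unusedTactic false

open MeasureTheory ProbabilityTheory Finset
open scoped ENNReal

/-- The distribution of a symmetric ±1 Bernoulli random variable. -/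
noncomputable def bernPM : Measure ℝ :=
  (1 / 2 : ℝ≥0∞) • Measure.dirac 1 + (1 / 2 : ℝ≥0∞) • Measure.dirac (-1)

/-- The Molchan–Golosov constant `c_H`. -/
noncomputable def cH (H : ℝ) : ℝ :=
  Real.sqrt (2 * H * Real.Gamma (3 / 2 - H) / (Real.Gamma (H + 1 / 2) * Real.Gamma (2 - 2 * H)))

/-- The Walsh monomial `Ξ_A = ∏_{i∈A} ξ_i`. -/
def XiW {Ω : Type*} {n : ℕ} (ξ : Fin n → Ω → ℝ) (A : Finset (Fin n)) (ω : Ω) : ℝ :=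
  ∏ i ∈ A, ξ i ω

/-- The discrete Wick product on Walsh coefficients. -/
def wickProd {n : ℕ} (x y : Finset (Fin n) → ℝ) : Finset (Fin n) → ℝ :=
  fun C => ∑ A : Finset (Fin n), ∑ B : Finset (Fin n),
    if A ∪ B = C ∧ Disjoint A B then x A * y B else 0

/-- Iterated discrete Wick powers on Walsh coefficients. -/
def wickPowC {n : ℕ} (x : Finset (Fin n) → ℝ) : ℕ → Finset (Fin n) → ℝ
  | 0 => fun C => if C = ∅ then 1 else 0
  | k + 1 => wickProd (wickPowC x k) x

/-- Walsh coefficients of the walk `Σ_i b_i ξ_i`. -/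
def singC {n : ℕ} (b : Fin n → ℝ) : Finset (Fin n) → ℝ :=
  fun C => ∑ i : Fin n, if C = {i} then b i else 0

/-- The random walk `B^{H,n}_t(ω) = Σ_i b_i ξ_i(ω)`. -/
def walkRV {Ω : Type*} {n : ℕ} (ξ : Fin n → Ω → ℝ) (b : Fin n → ℝ) (ω : Ω) : ℝ :=
  ∑ i : Fin n, b i * ξ i ω

/-- The `k`-th discrete Wick power of the walk, as a random variable. -/
def wickPowRV {Ω : Type*} {n : ℕ} (ξ : Fin n → Ω → ℝ) (b : Fin n → ℝ) (k : ℕ) (ω : Ω) : ℝ :=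
  ∑ C : Finset (Fin n), wickPowC (singC b) k C * XiW ξ C ω

/-! ### Auxiliary integration lemmas -/

lemma integrable_dirac'' {f : ℝ → ℝ} (hf : Measurable f) (x : ℝ) :
    Integrable f (Measure.dirac x) := by
  refine ⟨hf.aestronglyMeasurable, ?_⟩
  simp [HasFiniteIntegral,
    lintegral_dirac' x (by measurability : Measurable fun a => (‖f a‖₊ : ℝ≥0∞))]

lemma integral_bernPM {f : ℝ → ℝ} (hf : Measurable f) :
    ∫ x, f x ∂bernPM = (f 1 + f (-1)) / 2 := by
  have h2 : (1/2 : ℝ≥0∞) ≠ ∞ := by simp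
  rw [bernPM, integral_add_measure ((integrable_dirac'' hf 1).smul_measure h2)
    ((integrable_dirac'' hf (-1)).smul_measure h2),
    integral_smul_measure, integral_smul_measure, integral_dirac, integral_dirac]
  simp [ENNReal.toReal_div]
  ring

section Prob
variable {Ω : Type*} [MeasurableSpace Ω] {P : Measure Ω} [IsProbabilityMeasure P]
variable {n : ℕ} {ξ : Fin n → Ω → ℝ}

lemma xi_moment (hmeas : ∀ i, Measurable (ξ i)) (hdist : ∀ i, Measure.map (ξ i) P = bernPM)
    (i : Fin n) (φ : ℝ → ℝ) (hφ : Measurable φ) :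
    ∫ ω, φ (ξ i ω) ∂P = (φ 1 + φ (-1)) / 2 := by
  rw [← integral_map (hmeas i).aemeasurable hφ.aestronglyMeasurable, hdist i, integral_bernPM hφ]

lemma integral_prod_indep {g : Fin n → Ω → ℝ} (hg : ∀ i, Measurable (g i))
    (hind : iIndepFun g P) :
    ∀ S : Finset (Fin n), ∫ ω, ∏ i ∈ S, g i ω ∂P = ∏ i ∈ S, ∫ ω, g i ω ∂P := by
  intro S
  induction S using Finset.induction_on with
  | empty => simp
  | @insert a s ha ih =>
    have h1 : IndepFun (∏ j ∈ s, g j) (g a) P :=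
      hind.indepFun_finset_prod_of_notMem hg ha
    have h2 : (fun ω => ∏ i ∈ insert a s, g i ω) = (∏ j ∈ s, g j) * g a := by
      funext ω
      simp [Finset.prod_insert ha, mul_comm]
    rw [show (∫ ω, ∏ i ∈ insert a s, g i ω ∂P) = ∫ ω, ((∏ j ∈ s, g j) * g a) ω ∂P by rw [h2],
      h1.integral_mul_eq_mul_integral (by
        have : Measurable (∏ j ∈ s, g j) := by
          rw [show (∏ j ∈ s, g j) = fun ω => ∏ j ∈ s, g j ω by funext ω; simp]
          exact Finset.measurable_prod s (fun i _ => hg i)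
        exact this.aestronglyMeasurable)
        (hg a).aestronglyMeasurable]
    rw [Finset.prod_insert ha]
    rw [show (∫ ω, (∏ j ∈ s, g j) ω ∂P) = ∫ ω, ∏ i ∈ s, g i ω ∂P by
      congr 1; funext ω; simp]
    rw [ih]; ring

lemma integral_XiW_mul' (hmeas : ∀ i, Measurable (ξ i))
    (hindep : iIndepFun ξ P)
    (hdist : ∀ i, Measure.map (ξ i) P = bernPM) (A B : Finset (Fin n)) :
    ∫ ω, XiW ξ A ω * XiW ξ B ω ∂P = if A = B then 1 else 0 := by
  set φ : Fin n → ℝ → ℝ := fun i x => (if i ∈ A then x else 1) * (if i ∈ B then x else 1)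
    with hφdef
  have hφ : ∀ i, Measurable (φ i) := by
    intro i
    apply Measurable.mul <;> exact Measurable.ite (by simp) measurable_id measurable_const
  have hpt : ∀ ω, XiW ξ A ω * XiW ξ B ω = ∏ i : Fin n, φ i (ξ i ω) := by
    intro ω
    have hA : XiW ξ A ω = ∏ i : Fin n, (if i ∈ A then ξ i ω else 1) := by
      rw [Finset.prod_ite_mem, Finset.univ_inter]; rfl
    have hB : XiW ξ B ω = ∏ i : Fin n, (if i ∈ B then ξ i ω else 1) := by
      rw [Finset.prod_ite_mem, Finset.univ_inter]; rfl
    rw [hA, hB, ← Finset.prod_mul_distrib]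
  have hind2 : iIndepFun (fun i => φ i ∘ ξ i) P :=
    hindep.comp φ hφ
  have hprod := integral_prod_indep (g := fun i => φ i ∘ ξ i)
    (fun i => (hφ i).comp (hmeas i)) hind2 Finset.univ
  simp_rw [hpt]
  rw [show (∫ ω, ∏ i : Fin n, φ i (ξ i ω) ∂P) = ∫ ω, ∏ i : Fin n, (φ i ∘ ξ i) ω ∂P from rfl,
    hprod]
  have hfac : ∀ i, (∫ ω, (φ i ∘ ξ i) ω ∂P) = if (i ∈ A ↔ i ∈ B) then 1 else 0 := by
    intro i
    rw [show (∫ ω, (φ i ∘ ξ i) ω ∂P) = ∫ ω, φ i (ξ i ω) ∂P from rfl,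
      xi_moment hmeas hdist i (φ i) (hφ i)]
    by_cases hiA : i ∈ A <;> by_cases hiB : i ∈ B <;> simp [hφdef, hiA, hiB] <;> norm_num
  simp_rw [hfac]
  by_cases hAB : A = B
  · subst hAB; simp
  · rw [if_neg hAB]
    obtain ⟨i, hi⟩ : ∃ i, ¬(i ∈ A ↔ i ∈ B) := by
      by_contra h
      push_neg at h
      exact hAB (Finset.ext fun i => by have := h i; tauto)
    exact Finset.prod_eq_zero (Finset.mem_univ i) (by rw [if_neg hi])

lemma xi_ae_abs (hmeas : ∀ i, Measurable (ξ i))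
    (hdist : ∀ i, Measure.map (ξ i) P = bernPM) (i : Fin n) :
    ∀ᵐ ω ∂P, |ξ i ω| = 1 := by
  have hset : MeasurableSet {x : ℝ | |x| = 1} := by
    have : {x : ℝ | |x| = 1} = (fun x : ℝ => |x|) ⁻¹' {1} := rfl
    rw [this]
    exact measurable_abs (measurableSet_singleton 1)
  have key : P ((ξ i) ⁻¹' {x : ℝ | |x| = 1}ᶜ) = 0 := by
    have := Measure.map_apply (μ := P) (hmeas i) hset.compl
    rw [hdist i] at this
    rw [← this]
    rw [bernPM]
    simp only [Measure.add_apply, Measure.smul_apply, smul_eq_mul]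
    rw [Measure.dirac_apply' _ hset.compl, Measure.dirac_apply' _ hset.compl]
    have h1 : (1 : ℝ) ∈ {x : ℝ | |x| = 1} := by simp
    have h2 : (-1 : ℝ) ∈ {x : ℝ | |x| = 1} := by simp
    simp [Set.indicator_of_notMem, h1, h2]
  rw [ae_iff]
  convert key using 2
  rfl

lemma measurable_XiW (hmeas : ∀ i, Measurable (ξ i)) (A : Finset (Fin n)) :
    Measurable (XiW ξ A) :=
  Finset.measurable_prod A (fun i _ => hmeas i)

lemma integrable_XiW_mul (hmeas : ∀ i, Measurable (ξ i))
    (hdist : ∀ i, Measure.map (ξ i) P = bernPM) (A B : Finset (Fin n)) :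
    Integrable (fun ω => XiW ξ A ω * XiW ξ B ω) P := by
  have hae : ∀ᵐ ω ∂P, ∀ i : Fin n, |ξ i ω| = 1 :=
    (ae_all_iff).2 (fun i => xi_ae_abs hmeas hdist i)
  refine Integrable.mono' (integrable_const (1 : ℝ))
    ((measurable_XiW hmeas A).mul (measurable_XiW hmeas B)).aestronglyMeasurable ?_
  filter_upwards [hae] with ω hω
  have hA : |XiW ξ A ω| = 1 := by
    rw [XiW, Finset.abs_prod]
    exact Finset.prod_eq_one (fun i _ => hω i)
  have hB : |XiW ξ B ω| = 1 := by
    rw [XiW, Finset.abs_prod]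
    exact Finset.prod_eq_one (fun i _ => hω i)
  rw [Real.norm_eq_abs, abs_mul, hA, hB]
  norm_num

lemma integral_walsh_mul (hmeas : ∀ i, Measurable (ξ i))
    (hindep : iIndepFun ξ P)
    (hdist : ∀ i, Measure.map (ξ i) P = bernPM)
    (x y : Finset (Fin n) → ℝ) :
    ∫ ω, (∑ C : Finset (Fin n), x C * XiW ξ C ω) * (∑ C : Finset (Fin n), y C * XiW ξ C ω) ∂P
      = ∑ C : Finset (Fin n), x C * y C := by
  have hpt : ∀ ω, (∑ C : Finset (Fin n), x C * XiW ξ C ω) * (∑ C : Finset (Fin n), y C * XiW ξ C ω)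
      = ∑ C : Finset (Fin n), ∑ D : Finset (Fin n), (x C * y D) * (XiW ξ C ω * XiW ξ D ω) := by
    intro ω
    rw [Finset.sum_mul_sum]
    exact Finset.sum_congr rfl fun C _ => Finset.sum_congr rfl fun D _ => by ring
  simp_rw [hpt]
  rw [integral_finset_sum _ (fun C _ => integrable_finset_sum _
    (fun D _ => ((integrable_XiW_mul hmeas hdist C D).const_mul _)))]
  have h2 : ∀ C, (∫ ω, ∑ D : Finset (Fin n), (x C * y D) * (XiW ξ C ω * XiW ξ D ω) ∂P)
      = ∑ D : Finset (Fin n), (x C * y D) * (if C = D then 1 else 0) := by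
    intro C
    rw [integral_finset_sum _ (fun D _ => ((integrable_XiW_mul hmeas hdist C D).const_mul _))]
    exact Finset.sum_congr rfl fun D _ => by
      rw [integral_const_mul, integral_XiW_mul' hmeas hindep hdist C D]
  simp_rw [h2, mul_ite, mul_one, mul_zero]
  exact Finset.sum_congr rfl fun C _ => by simp

end Prob

/-! ### Combinatorial lemmas -/

section Comb
variable {n : ℕ}

lemma pow_expand_gen {ι : Type*} [Fintype ι] [DecidableEq ι] (a : Fin n → ℝ) :
    (∑ i : Fin n, a i) ^ (Fintype.card ι) = ∑ g : ι → Fin n, ∏ m : ι, a (g m) := by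
  rw [show (∑ i : Fin n, a i) ^ (Fintype.card ι) = ∏ _m : ι, (∑ i : Fin n, a i) by
    rw [Finset.prod_const, Finset.card_univ]]
  rw [Finset.prod_univ_sum, Fintype.piFinset_univ]

lemma pow_expand (a : Fin n → ℝ) (N : ℕ) :
    (∑ i : Fin n, a i) ^ N = ∑ f : Fin N → Fin n, ∏ k : Fin N, a (f k) := by
  have := pow_expand_gen (ι := Fin N) a
  rwa [Fintype.card_fin] at this

lemma fiber_card (N : ℕ) (C : Finset (Fin n)) (hC : C.card = N) :
    ((Finset.univ.filter (fun f : Fin N → Fin n => Function.Injective f)).filter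
      (fun f => Finset.image f Finset.univ = C)).card = N.factorial := by
  classical
  have hbij : ((Finset.univ.filter (fun f : Fin N → Fin n => Function.Injective f)).filter
      (fun f => Finset.image f Finset.univ = C)).card
      = (Finset.univ : Finset (Fin N ↪ {x : Fin n // x ∈ C})).card := by
    exact Finset.card_bij'
      (fun f hf => (⟨fun k => ⟨f k, by
          rw [← (Finset.mem_filter.1 hf).2]
          exact Finset.mem_image_of_mem f (Finset.mem_univ k)⟩,
        fun k l h => (Finset.mem_filter.1 (Finset.mem_filter.1 hf).1).2
          (congrArg Subtype.val h)⟩ : Fin N ↪ {x : Fin n // x ∈ C}))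
      (fun e _ => fun k => (e k : Fin n))
      (fun f hf => Finset.mem_univ _)
      (fun e he => by
        simp only [Finset.mem_filter, Finset.mem_univ, true_and]
        have hinj : Function.Injective (fun k => ((e k : Fin n))) := by
          intro k l h
          exact e.injective (Subtype.ext h)
        refine ⟨hinj, ?_⟩
        apply Finset.eq_of_subset_of_card_le
        · intro x hx
          simp only [Finset.mem_image] at hx
          obtain ⟨k, -, rfl⟩ := hx
          exact (e k).2
        · rw [Finset.card_image_of_injective _ hinj, Finset.card_univ, Fintype.card_fin, hC])
      (fun f hf => rfl)
      (fun e he => Function.Embedding.ext fun k => Subtype.ext rfl)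
  rw [hbij, Finset.card_univ, Fintype.card_embedding_eq, Fintype.card_fin,
    Fintype.card_coe, hC, Nat.descFactorial_self]

lemma sum_inj_group (N : ℕ) (h : Finset (Fin n) → ℝ) :
    ∑ f ∈ Finset.univ.filter (fun f : Fin N → Fin n => Function.Injective f),
        h (Finset.image f Finset.univ)
      = (N.factorial : ℝ) * ∑ C ∈ Finset.powersetCard N (Finset.univ : Finset (Fin n)), h C := by
  classical
  rw [← Finset.sum_fiberwise_of_maps_to (g := fun f : Fin N → Fin n => Finset.image f Finset.univ)
    (t := Finset.powersetCard N (Finset.univ : Finset (Fin n))) ?_ ]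
  · rw [Finset.mul_sum]
    refine Finset.sum_congr rfl fun C hC => ?_
    have hC' : C.card = N := (Finset.mem_powersetCard_univ).1 hC
    have hcongr : ∀ f ∈ (Finset.univ.filter (fun f : Fin N → Fin n => Function.Injective f)).filter
        (fun f => Finset.image f Finset.univ = C), h (Finset.image f Finset.univ) = h C := by
      intro f hf
      rw [(Finset.mem_filter.1 hf).2]
    rw [Finset.sum_congr rfl hcongr, Finset.sum_const, fiber_card N C hC', nsmul_eq_mul]
  · intro f hf
    rw [Finset.mem_powersetCard_univ,
      Finset.card_image_of_injective _ (Finset.mem_filter.1 hf).2, Finset.card_univ,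
      Fintype.card_fin]

lemma key_ident (bt bs : Fin n → ℝ) (N : ℕ) :
    (∑ i : Fin n, bt i * bt i) ^ N + (∑ i : Fin n, bs i * bs i) ^ N
        - 2 * (∑ i : Fin n, bt i * bs i) ^ N
        - (N.factorial : ℝ) * ∑ C ∈ Finset.powersetCard N (Finset.univ : Finset (Fin n)),
            (∏ i ∈ C, bt i - ∏ i ∈ C, bs i) ^ 2
      = ∑ f ∈ Finset.univ.filter (fun f : Fin N → Fin n => ¬ Function.Injective f),
          (∏ k : Fin N, bt (f k) - ∏ k : Fin N, bs (f k)) ^ 2 := by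
  classical
  have e1 : (∑ i : Fin n, bt i * bt i) ^ N + (∑ i : Fin n, bs i * bs i) ^ N
        - 2 * (∑ i : Fin n, bt i * bs i) ^ N
      = ∑ f : Fin N → Fin n, (∏ k : Fin N, bt (f k) - ∏ k : Fin N, bs (f k)) ^ 2 := by
    rw [pow_expand, pow_expand, pow_expand, ← Finset.sum_add_distrib, Finset.mul_sum,
      ← Finset.sum_sub_distrib]
    refine Finset.sum_congr rfl fun f _ => ?_
    rw [Finset.prod_mul_distrib, Finset.prod_mul_distrib, Finset.prod_mul_distrib]
    ring
  have e2 : (N.factorial : ℝ) * ∑ C ∈ Finset.powersetCard N (Finset.univ : Finset (Fin n)),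
        (∏ i ∈ C, bt i - ∏ i ∈ C, bs i) ^ 2
      = ∑ f ∈ Finset.univ.filter (fun f : Fin N → Fin n => Function.Injective f),
          (∏ k : Fin N, bt (f k) - ∏ k : Fin N, bs (f k)) ^ 2 := by
    rw [← sum_inj_group N (fun C => (∏ i ∈ C, bt i - ∏ i ∈ C, bs i) ^ 2)]
    refine Finset.sum_congr rfl fun f hf => ?_
    have hinj : Function.Injective f := (Finset.mem_filter.1 hf).2
    rw [Finset.prod_image (fun a _ b _ h => hinj h), Finset.prod_image (fun a _ b _ h => hinj h)]
  rw [e1, e2, ← Finset.sum_filter_add_sum_filter_not Finset.univ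
    (fun f : Fin N → Fin n => Function.Injective f)
    (fun f => (∏ k : Fin N, bt (f k) - ∏ k : Fin N, bs (f k)) ^ 2)]
  ring

lemma constrained_sum_le (a : Fin n → ℝ) (ha : ∀ i, 0 ≤ a i) (M S : ℝ) (hM0 : 0 ≤ M)
    (hM : ∀ i, a i ≤ M) (hS : ∑ i : Fin n, a i ≤ S) (N : ℕ)
    (k l : Fin N) (hkl : k ≠ l) :
    ∑ f ∈ Finset.univ.filter (fun f : Fin N → Fin n => f k = f l),
        ∏ m : Fin N, a (f m) ≤ M * S ^ (N - 1) := by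
  classical
  have hprodnn : ∀ (f : Fin N → Fin n) (s : Finset (Fin N)), 0 ≤ ∏ m ∈ s, a (f m) :=
    fun f s => Finset.prod_nonneg (fun m _ => ha (f m))
  have step1 : ∑ f ∈ Finset.univ.filter (fun f : Fin N → Fin n => f k = f l),
      ∏ m : Fin N, a (f m)
      ≤ M * ∑ f ∈ Finset.univ.filter (fun f : Fin N → Fin n => f k = f l),
          ∏ m ∈ Finset.univ.erase l, a (f m) := by
    rw [Finset.mul_sum]
    refine Finset.sum_le_sum fun f _ => ?_
    rw [← Finset.mul_prod_erase Finset.univ (fun m => a (f m)) (Finset.mem_univ l)]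
    exact mul_le_mul_of_nonneg_right (hM (f l)) (hprodnn f _)
  have step2 : ∑ f ∈ Finset.univ.filter (fun f : Fin N → Fin n => f k = f l),
      ∏ m ∈ Finset.univ.erase l, a (f m)
      = ∑ g : {m : Fin N // m ≠ l} → Fin n, ∏ m' : {m : Fin N // m ≠ l}, a (g m') := by
    refine Finset.sum_bij'
      (fun f _ => fun m' : {m : Fin N // m ≠ l} => f m'.1)
      (fun g _ => fun m => if h : m = l then g ⟨k, hkl⟩ else g ⟨m, h⟩)
      (fun f _ => Finset.mem_univ _)
      (fun g _ => ?_) (fun f hf => ?_) (fun g _ => ?_) (fun f _ => ?_)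
    · simp only [Finset.mem_filter, Finset.mem_univ, true_and]
      rw [dif_pos trivial, dif_neg hkl]
    · funext m
      beta_reduce
      by_cases hm : m = l
      · subst hm
        rw [dif_pos rfl]
        exact (Finset.mem_filter.1 hf).2
      · rw [dif_neg hm]
    · funext m'
      beta_reduce
      rw [dif_neg m'.2]
    · exact (Finset.prod_subtype (Finset.univ.erase l)
        (fun m => by simp [Finset.mem_erase]) (fun m => a (f m)))
  have step3 : ∑ g : {m : Fin N // m ≠ l} → Fin n, ∏ m' : {m : Fin N // m ≠ l}, a (g m')
      = (∑ i : Fin n, a i) ^ (N - 1) := by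
    rw [← pow_expand_gen a]
    congr 1
    rw [Fintype.card_subtype_compl, Fintype.card_fin, Fintype.card_subtype_eq]
  calc ∑ f ∈ Finset.univ.filter (fun f : Fin N → Fin n => f k = f l), ∏ m : Fin N, a (f m)
      ≤ M * ∑ f ∈ Finset.univ.filter (fun f : Fin N → Fin n => f k = f l),
          ∏ m ∈ Finset.univ.erase l, a (f m) := step1
    _ = M * (∑ i : Fin n, a i) ^ (N - 1) := by rw [step2, step3]
    _ ≤ M * S ^ (N - 1) := by
        refine mul_le_mul_of_nonneg_left (pow_le_pow_left₀ ?_ hS _) hM0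
        exact Finset.sum_nonneg fun i _ => ha i

lemma noninj_sum_le (a : Fin n → ℝ) (ha : ∀ i, 0 ≤ a i) (M S : ℝ) (hM0 : 0 ≤ M)
    (hM : ∀ i, a i ≤ M) (hS : ∑ i : Fin n, a i ≤ S) (N : ℕ) :
    ∑ f ∈ Finset.univ.filter (fun f : Fin N → Fin n => ¬ Function.Injective f),
        ∏ m : Fin N, a (f m)
      ≤ ((∑ i ∈ Finset.range N, i : ℕ) : ℝ) * (M * S ^ (N - 1)) := by
  classical
  set F : (Fin N → Fin n) → ℝ := fun f => ∏ m : Fin N, a (f m) with hF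
  have hF0 : ∀ f, 0 ≤ F f := fun f => Finset.prod_nonneg (fun m _ => ha (f m))
  have hite0 : ∀ (f : Fin N → Fin n) (k l : Fin N),
      0 ≤ (if f k = f l then F f else 0) := by
    intro f k l
    split
    · exact hF0 f
    · exact le_refl 0
  have h1 : ∀ f ∈ Finset.univ.filter (fun f : Fin N → Fin n => ¬ Function.Injective f),
      F f ≤ ∑ l : Fin N, ∑ k ∈ Finset.Iio l, (if f k = f l then F f else 0) := by
    intro f hf
    have hninj : ¬ Function.Injective f := (Finset.mem_filter.1 hf).2
    rw [Function.Injective] at hninj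
    push_neg at hninj
    obtain ⟨x, y, hxy, hne⟩ := hninj
    obtain ⟨k₀, l₀, hkl, heq⟩ : ∃ k₀ l₀ : Fin N, k₀ < l₀ ∧ f k₀ = f l₀ := by
      rcases hne.lt_or_gt with h | h
      · exact ⟨x, y, h, hxy⟩
      · exact ⟨y, x, h, hxy.symm⟩
    calc F f = (if f k₀ = f l₀ then F f else 0) := by rw [if_pos heq]
      _ ≤ ∑ k ∈ Finset.Iio l₀, (if f k = f l₀ then F f else 0) :=
          Finset.single_le_sum (fun k _ => hite0 f k l₀) (Finset.mem_Iio.2 hkl)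
      _ ≤ ∑ l : Fin N, ∑ k ∈ Finset.Iio l, (if f k = f l then F f else 0) :=
          Finset.single_le_sum
            (fun l _ => Finset.sum_nonneg (fun k _ => hite0 f k l)) (Finset.mem_univ l₀)
  calc ∑ f ∈ Finset.univ.filter (fun f : Fin N → Fin n => ¬ Function.Injective f), F f
      ≤ ∑ f ∈ Finset.univ.filter (fun f : Fin N → Fin n => ¬ Function.Injective f),
          ∑ l : Fin N, ∑ k ∈ Finset.Iio l, (if f k = f l then F f else 0) :=
        Finset.sum_le_sum h1
    _ = ∑ l : Fin N, ∑ k ∈ Finset.Iio l,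
          ∑ f ∈ Finset.univ.filter (fun f : Fin N → Fin n => ¬ Function.Injective f),
            (if f k = f l then F f else 0) := by
        rw [Finset.sum_comm]
        exact Finset.sum_congr rfl fun l _ => Finset.sum_comm
    _ ≤ ∑ l : Fin N, ∑ k ∈ Finset.Iio l,
          ∑ f : Fin N → Fin n, (if f k = f l then F f else 0) := by
        refine Finset.sum_le_sum fun l _ => Finset.sum_le_sum fun k _ => ?_
        exact Finset.sum_le_sum_of_subset_of_nonneg (Finset.filter_subset _ _)
          (fun f _ _ => hite0 f k l)
    _ ≤ ∑ l : Fin N, ∑ _k ∈ Finset.Iio l, (M * S ^ (N - 1)) := by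
        refine Finset.sum_le_sum fun l _ => Finset.sum_le_sum fun k hk => ?_
        rw [← Finset.sum_filter]
        exact constrained_sum_le a ha M S hM0 hM hS N k l (ne_of_lt (Finset.mem_Iio.1 hk))
    _ = ((∑ i ∈ Finset.range N, i : ℕ) : ℝ) * (M * S ^ (N - 1)) := by
        simp only [Finset.sum_const, Fin.card_Iio, nsmul_eq_mul]
        rw [← Finset.sum_mul, ← Nat.cast_sum, ← Fin.sum_univ_eq_sum_range (fun i => i)]

end Comb
lemma wickProd_singC (x : Finset (Fin n) → ℝ) (b : Fin n → ℝ) (C : Finset (Fin n)) :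
    wickProd x (singC b) C = ∑ j ∈ C, x (C.erase j) * b j := by
  have h1 : ∀ A B : Finset (Fin n), (if A ∪ B = C ∧ Disjoint A B then x A * singC b B else 0)
      = ∑ i : Fin n, if B = {i} ∧ (A ∪ {i} = C ∧ i ∉ A) then x A * b i else 0 := by
    intro A B
    by_cases hB : ∃ i : Fin n, B = {i}
    · obtain ⟨i, rfl⟩ := hB
      rw [Finset.sum_eq_single i]
      · have hs : singC b {i} = b i := by
          rw [singC, Finset.sum_eq_single i]
          · simp
          · intro j _ hij
            rw [if_neg (fun h => hij (Finset.singleton_injective h).symm)]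
          · simp
        rw [hs]
        refine if_congr ?_ rfl rfl
        rw [Finset.disjoint_singleton_right]
        simp
      · intro j _ hij
        rw [if_neg]
        rintro ⟨h, -⟩
        exact hij (Finset.singleton_injective h).symm
      · simp
    · push_neg at hB
      have hs : singC b B = 0 := Finset.sum_eq_zero (fun i _ => if_neg (hB i))
      rw [hs, mul_zero, ite_self,
        Finset.sum_eq_zero (fun i _ => by rw [if_neg]; rintro ⟨h, -⟩; exact hB i h)]
  have hcond : ∀ (A : Finset (Fin n)) (i : Fin n),
      (A ∪ {i} = C ∧ i ∉ A) ↔ (i ∈ C ∧ A = C.erase i) := by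
    intro A i
    constructor
    · rintro ⟨h1, h2⟩
      refine ⟨by rw [← h1]; simp, ?_⟩
      have : A ∪ {i} = insert i A := by rw [Finset.union_comm]; rfl
      rw [← h1, this, Finset.erase_insert h2]
    · rintro ⟨h1, rfl⟩
      refine ⟨?_, Finset.notMem_erase i C⟩
      rw [show C.erase i ∪ {i} = insert i (C.erase i) by rw [Finset.union_comm]; rfl,
        Finset.insert_erase h1]
  have h2 : ∀ A : Finset (Fin n),
      (∑ B : Finset (Fin n), ∑ i : Fin n,
          if B = {i} ∧ (A ∪ {i} = C ∧ i ∉ A) then x A * b i else 0)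
        = ∑ i : Fin n, if i ∈ C ∧ A = C.erase i then x A * b i else 0 := by
    intro A
    rw [Finset.sum_comm]
    refine Finset.sum_congr rfl fun i _ => ?_
    rw [Finset.sum_eq_single ({i} : Finset (Fin n))]
    · simp only [true_and]
      exact if_congr (hcond A i) rfl rfl
    · intro B _ hBne
      rw [if_neg]
      rintro ⟨h, -⟩
      exact hBne h
    · simp
  have h3 : ∀ i : Fin n,
      (∑ A : Finset (Fin n), if i ∈ C ∧ A = C.erase i then x A * b i else 0)
        = if i ∈ C then x (C.erase i) * b i else 0 := by
    intro i
    by_cases hi : i ∈ C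
    · rw [Finset.sum_eq_single (C.erase i)]
      · simp [hi]
      · intro A _ hA
        rw [if_neg]
        rintro ⟨-, h⟩
        exact hA h
      · simp
    · rw [if_neg hi, Finset.sum_eq_zero]
      intro A _
      rw [if_neg]
      rintro ⟨h, -⟩
      exact hi h
  rw [wickProd]
  simp_rw [h1, h2]
  rw [Finset.sum_comm]
  simp_rw [h3]
  rw [Finset.sum_ite_mem, Finset.univ_inter]

lemma wickPowC_singC (b : Fin n → ℝ) (k : ℕ) (C : Finset (Fin n)) :
    wickPowC (singC b) k C
      = if C.card = k then (k.factorial : ℝ) * ∏ i ∈ C, b i else 0 := by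
  induction k generalizing C with
  | zero =>
    by_cases h : C = ∅
    · subst h; simp [wickPowC]
    · show (if C = ∅ then (1:ℝ) else 0) = _
      rw [if_neg h, if_neg (fun hc => h (Finset.card_eq_zero.1 hc))]
  | succ k ih =>
    rw [wickPowC, wickProd_singC]
    simp_rw [ih]
    by_cases hc : C.card = k + 1
    · rw [if_pos hc]
      have hterm : ∀ j ∈ C, (if (C.erase j).card = k then (k.factorial : ℝ) * ∏ i ∈ C.erase j, b i
          else 0) * b j = (k.factorial : ℝ) * ∏ i ∈ C, b i := by
        intro j hj
        rw [if_pos (by rw [Finset.card_erase_of_mem hj, hc]; rfl), mul_assoc,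
          Finset.prod_erase_mul _ _ hj]
      rw [Finset.sum_congr rfl hterm, Finset.sum_const, hc, nsmul_eq_mul, Nat.factorial_succ]
      push_cast
      ring
    · rw [if_neg hc]
      apply Finset.sum_eq_zero
      intro j hj
      rw [if_neg, zero_mul]
      intro h
      have hpos : 0 < C.card := Finset.card_pos.2 ⟨j, hj⟩
      rw [Finset.card_erase_of_mem hj] at h
      omega


/-! ### Representation lemmas -/

section Repr
variable {Ω : Type*} [MeasurableSpace Ω] {P : Measure Ω} [IsProbabilityMeasure P]
variable {n : ℕ} {ξ : Fin n → Ω → ℝ}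

lemma singC_singleton (b : Fin n → ℝ) (i : Fin n) : singC b {i} = b i := by
  rw [show singC b {i} = ∑ j : Fin n, if ({i} : Finset (Fin n)) = {j} then b j else 0 from rfl,
    Finset.sum_eq_single i]
  · simp
  · intro j _ hij
    rw [if_neg (fun h => hij (Finset.singleton_injective h).symm)]
  · simp

lemma walk_repr (b : Fin n → ℝ) (ω : Ω) :
    walkRV ξ b ω = ∑ C : Finset (Fin n), singC b C * XiW ξ C ω := by
  rw [walkRV]
  symm
  calc ∑ C : Finset (Fin n), singC b C * XiW ξ C ω
      = ∑ C : Finset (Fin n), ∑ i : Fin n, (if C = {i} then b i * XiW ξ C ω else 0) := by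
        refine Finset.sum_congr rfl fun C _ => ?_
        rw [show singC b C = ∑ i : Fin n, if C = {i} then b i else 0 from rfl, Finset.sum_mul]
        refine Finset.sum_congr rfl fun i _ => ?_
        rw [ite_mul, zero_mul]
    _ = ∑ i : Fin n, ∑ C : Finset (Fin n), (if C = {i} then b i * XiW ξ C ω else 0) :=
        Finset.sum_comm
    _ = ∑ i : Fin n, b i * XiW ξ {i} ω := by
        refine Finset.sum_congr rfl fun i _ => ?_
        rw [Finset.sum_eq_single ({i} : Finset (Fin n))]
        · rw [if_pos rfl]
        · intro C _ hC
          rw [if_neg hC]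
        · simp
    _ = ∑ i : Fin n, b i * ξ i ω := by
        refine Finset.sum_congr rfl fun i _ => ?_
        rw [XiW, Finset.prod_singleton]

lemma walk_inner (hmeas : ∀ i, Measurable (ξ i))
    (hindep : iIndepFun ξ P)
    (hdist : ∀ i, Measure.map (ξ i) P = bernPM) (b b' : Fin n → ℝ) :
    ∫ ω, walkRV ξ b ω * walkRV ξ b' ω ∂P = ∑ i : Fin n, b i * b' i := by
  simp_rw [walk_repr]
  rw [integral_walsh_mul hmeas hindep hdist]
  calc ∑ C : Finset (Fin n), singC b C * singC b' C
      = ∑ C : Finset (Fin n), ∑ i : Fin n, (if C = {i} then b i * b' i else 0) := by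
        refine Finset.sum_congr rfl fun C _ => ?_
        by_cases hC : ∃ i : Fin n, C = {i}
        · obtain ⟨i, rfl⟩ := hC
          rw [singC_singleton, singC_singleton, Finset.sum_eq_single i]
          · rw [if_pos rfl]
          · intro j _ hij
            rw [if_neg (fun h => hij (Finset.singleton_injective h).symm)]
          · simp
        · push_neg at hC
          rw [show singC b C = 0 from Finset.sum_eq_zero fun i _ => if_neg (hC i), zero_mul,
            Finset.sum_eq_zero fun i _ => if_neg (hC i)]
    _ = ∑ i : Fin n, ∑ C : Finset (Fin n), (if C = {i} then b i * b' i else 0) :=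
        Finset.sum_comm
    _ = ∑ i : Fin n, b i * b' i := by
        refine Finset.sum_congr rfl fun i _ => ?_
        rw [Finset.sum_eq_single ({i} : Finset (Fin n))]
        · rw [if_pos rfl]
        · intro C _ hC
          rw [if_neg hC]
        · simp

lemma wick_diff_repr (bt bs : Fin n → ℝ) (N : ℕ) (ω : Ω) :
    wickPowRV ξ bt N ω - wickPowRV ξ bs N ω
      = ∑ C : Finset (Fin n),
          (wickPowC (singC bt) N C - wickPowC (singC bs) N C) * XiW ξ C ω := by
  rw [wickPowRV, wickPowRV, ← Finset.sum_sub_distrib]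
  exact Finset.sum_congr rfl fun C _ => by ring

lemma wick_diff_sq_integral (hmeas : ∀ i, Measurable (ξ i))
    (hindep : iIndepFun ξ P)
    (hdist : ∀ i, Measure.map (ξ i) P = bernPM) (bt bs : Fin n → ℝ) (N : ℕ) :
    ∫ ω, (wickPowRV ξ bt N ω - wickPowRV ξ bs N ω) ^ 2 ∂P
      = (N.factorial : ℝ) ^ 2 *
          ∑ C ∈ Finset.powersetCard N (Finset.univ : Finset (Fin n)),
            (∏ i ∈ C, bt i - ∏ i ∈ C, bs i) ^ 2 := by
  classical
  simp_rw [pow_two, wick_diff_repr]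
  rw [integral_walsh_mul hmeas hindep hdist]
  have hterm : ∀ C : Finset (Fin n),
      (wickPowC (singC bt) N C - wickPowC (singC bs) N C) *
        (wickPowC (singC bt) N C - wickPowC (singC bs) N C)
      = if C.card = N then (N.factorial : ℝ) ^ 2 * (∏ i ∈ C, bt i - ∏ i ∈ C, bs i) ^ 2
        else 0 := by
    intro C
    rw [wickPowC_singC, wickPowC_singC]
    split
    · ring
    · ring
  simp_rw [hterm]
  rw [← Finset.sum_filter]
  rw [show (Finset.univ.filter fun C : Finset (Fin n) => C.card = N)
      = Finset.powersetCard N (Finset.univ : Finset (Fin n)) by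
    ext C
    simp [Finset.mem_powersetCard_univ]]
  rw [← Finset.mul_sum]
  congr 1
  · ring
  · exact Finset.sum_congr rfl fun C _ => by ring

end Repr

/-- The `L²` sandwich for differences of discrete Wick powers: for `s ≤ t` in `[0,1]`
and `N ≤ ⌊ns⌋`,
`0 ≤ E[(B^{H,n}_t)²]^N + E[(B^{H,n}_s)²]^N − 2E[B^{H,n}_t B^{H,n}_s]^N
   − (1/N!)E[((B^{H,n}_t)^{⋄ₙN} − (B^{H,n}_s)^{⋄ₙN})²] ≤ 2c_H² N² t^{2H(N−1)} n^{−(2−2H)}`. -/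
theorem stmt14 {Ω : Type*} [MeasurableSpace Ω] (P : Measure Ω) [IsProbabilityMeasure P]
    (H : ℝ) (hH : H ∈ Set.Ioo (1 / 2 : ℝ) 1) (n : ℕ) (hn : 1 ≤ n)
    (ξ : Fin n → Ω → ℝ) (hmeas : ∀ i, Measurable (ξ i))
    (hindep : iIndepFun ξ P)
    (hdist : ∀ i, Measure.map (ξ i) P = bernPM)
    (s t : ℝ) (hs : s ∈ Set.Icc (0 : ℝ) 1) (ht : t ∈ Set.Icc (0 : ℝ) 1) (hst : s ≤ t)
    (bt bs : Fin n → ℝ)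
    (hpos : ∀ i, 0 ≤ bs i) (hmono : ∀ i, bs i ≤ bt i)
    (hbd : ∀ i, bt i ≤ 2 * cH H * (n : ℝ) ^ (-(1 - H)))
    (het : ∑ i : Fin n, (bt i) ^ 2 ≤ t ^ (2 * H))
    (hsupps : ∀ i : Fin n, ⌊(n : ℝ) * s⌋₊ ≤ (i : ℕ) → bs i = 0)
    (hsuppt : ∀ i : Fin n, ⌊(n : ℝ) * t⌋₊ ≤ (i : ℕ) → bt i = 0)
    (N : ℕ) (hN : N ≤ ⌊(n : ℝ) * s⌋₊) :
    0 ≤ (∫ ω, (walkRV ξ bt ω) ^ 2 ∂P) ^ N + (∫ ω, (walkRV ξ bs ω) ^ 2 ∂P) ^ N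
          - 2 * (∫ ω, walkRV ξ bt ω * walkRV ξ bs ω ∂P) ^ N
          - (1 / (N.factorial : ℝ)) *
              ∫ ω, (wickPowRV ξ bt N ω - wickPowRV ξ bs N ω) ^ 2 ∂P
    ∧ (∫ ω, (walkRV ξ bt ω) ^ 2 ∂P) ^ N + (∫ ω, (walkRV ξ bs ω) ^ 2 ∂P) ^ N
          - 2 * (∫ ω, walkRV ξ bt ω * walkRV ξ bs ω ∂P) ^ N
          - (1 / (N.factorial : ℝ)) *
              ∫ ω, (wickPowRV ξ bt N ω - wickPowRV ξ bs N ω) ^ 2 ∂P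
        ≤ 2 * (cH H) ^ 2 * (N : ℝ) ^ 2 * t ^ (2 * H * ((N : ℝ) - 1)) *
            (n : ℝ) ^ (-(2 - 2 * H)) := by
  classical
  have hbt0 : ∀ i, 0 ≤ bt i := fun i => le_trans (hpos i) (hmono i)
  have Ett : (∫ ω, (walkRV ξ bt ω) ^ 2 ∂P) = ∑ i : Fin n, bt i * bt i := by
    simp_rw [pow_two]
    exact walk_inner hmeas hindep hdist bt bt
  have Ess : (∫ ω, (walkRV ξ bs ω) ^ 2 ∂P) = ∑ i : Fin n, bs i * bs i := by
    simp_rw [pow_two]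
    exact walk_inner hmeas hindep hdist bs bs
  have Ets : (∫ ω, walkRV ξ bt ω * walkRV ξ bs ω ∂P) = ∑ i : Fin n, bt i * bs i :=
    walk_inner hmeas hindep hdist bt bs
  have Ed := wick_diff_sq_integral hmeas hindep hdist bt bs N
  have hfact : (N.factorial : ℝ) ≠ 0 := Nat.cast_ne_zero.2 (Nat.factorial_ne_zero N)
  have hQ : (∫ ω, (walkRV ξ bt ω) ^ 2 ∂P) ^ N + (∫ ω, (walkRV ξ bs ω) ^ 2 ∂P) ^ N
          - 2 * (∫ ω, walkRV ξ bt ω * walkRV ξ bs ω ∂P) ^ N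
          - (1 / (N.factorial : ℝ)) *
              ∫ ω, (wickPowRV ξ bt N ω - wickPowRV ξ bs N ω) ^ 2 ∂P
      = ∑ f ∈ Finset.univ.filter (fun f : Fin N → Fin n => ¬ Function.Injective f),
          (∏ k : Fin N, bt (f k) - ∏ k : Fin N, bs (f k)) ^ 2 := by
    rw [Ett, Ess, Ets, Ed,
      show (1 / (N.factorial : ℝ)) * ((N.factorial : ℝ) ^ 2 *
          ∑ C ∈ Finset.powersetCard N (Finset.univ : Finset (Fin n)),
            (∏ i ∈ C, bt i - ∏ i ∈ C, bs i) ^ 2)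
        = (N.factorial : ℝ) * ∑ C ∈ Finset.powersetCard N (Finset.univ : Finset (Fin n)),
            (∏ i ∈ C, bt i - ∏ i ∈ C, bs i) ^ 2 by
        field_simp]
    exact key_ident bt bs N
  rw [hQ]
  constructor
  · exact Finset.sum_nonneg fun f _ => sq_nonneg _
  · -- upper bound
    set M : ℝ := (2 * cH H * (n : ℝ) ^ (-(1 - H))) * (2 * cH H * (n : ℝ) ^ (-(1 - H)))
      with hMdef
    have hc0 : 0 ≤ cH H := Real.sqrt_nonneg _
    have hb0 : 0 ≤ 2 * cH H * (n : ℝ) ^ (-(1 - H)) :=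
      mul_nonneg (mul_nonneg (by norm_num) hc0) (Real.rpow_nonneg (Nat.cast_nonneg n) _)
    have hnpos : (0 : ℝ) < (n : ℝ) := by exact_mod_cast hn
    have step1 : ∑ f ∈ Finset.univ.filter (fun f : Fin N → Fin n => ¬ Function.Injective f),
          (∏ k : Fin N, bt (f k) - ∏ k : Fin N, bs (f k)) ^ 2
        ≤ ∑ f ∈ Finset.univ.filter (fun f : Fin N → Fin n => ¬ Function.Injective f),
          ∏ m : Fin N, (bt (f m) * bt (f m)) := by
      refine Finset.sum_le_sum fun f _ => ?_
      have hx : ∏ k : Fin N, bs (f k) ≤ ∏ k : Fin N, bt (f k) :=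
        Finset.prod_le_prod (fun k _ => hpos (f k)) (fun k _ => hmono (f k))
      have hy : 0 ≤ ∏ k : Fin N, bs (f k) :=
        Finset.prod_nonneg fun k _ => hpos (f k)
      have hsq : ∏ m : Fin N, (bt (f m) * bt (f m)) = (∏ k : Fin N, bt (f k)) ^ 2 := by
        rw [Finset.prod_mul_distrib, sq]
      rw [hsq]
      exact sq_le_sq' (by linarith) (by linarith)
    have hSle : ∑ i : Fin n, bt i * bt i ≤ t ^ (2 * H) := by
      have : ∑ i : Fin n, bt i * bt i = ∑ i : Fin n, (bt i) ^ 2 :=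
        Finset.sum_congr rfl fun i _ => (pow_two (bt i)).symm
      rw [this]
      exact het
    have step2 := noninj_sum_le (fun i => bt i * bt i) (fun i => mul_self_nonneg _)
      M (t ^ (2 * H)) (mul_nonneg hb0 hb0)
      (fun i => mul_le_mul (hbd i) (hbd i) (hbt0 i) hb0) hSle N
    rcases Nat.eq_zero_or_pos N with hN0 | hN1
    · subst hN0
      simp only [Finset.range_zero, Finset.sum_empty, Nat.cast_zero, zero_mul] at step2
      have hR0 : (2 : ℝ) * (cH H) ^ 2 * ((0 : ℕ) : ℝ) ^ 2 * t ^ (2 * H * (((0 : ℕ) : ℝ) - 1)) *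
          (n : ℝ) ^ (-(2 - 2 * H)) = 0 := by
        norm_num
      rw [hR0]
      linarith [step1, step2]
    · have hN1' : 1 ≤ N := hN1
      have hc : ((N - 1 : ℕ) : ℝ) = (N : ℝ) - 1 := by
        rw [Nat.cast_sub hN1', Nat.cast_one]
      have hT : (t ^ (2 * H)) ^ (N - 1 : ℕ) = t ^ (2 * H * ((N : ℝ) - 1)) := by
        rw [← Real.rpow_natCast (t ^ (2 * H)) (N - 1), ← Real.rpow_mul ht.1, hc]
      have hMeq : M = 4 * (cH H) ^ 2 * (n : ℝ) ^ (-(2 - 2 * H)) := by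
        have hr : (n : ℝ) ^ (-(1 - H)) * (n : ℝ) ^ (-(1 - H)) = (n : ℝ) ^ (-(2 - 2 * H)) := by
          rw [← Real.rpow_add hnpos, show -(1 - H) + -(1 - H) = -(2 - 2 * H) by ring]
        calc M = 4 * (cH H) ^ 2 * ((n : ℝ) ^ (-(1 - H)) * (n : ℝ) ^ (-(1 - H))) := by
              rw [hMdef]; ring
          _ = 4 * (cH H) ^ 2 * (n : ℝ) ^ (-(2 - 2 * H)) := by rw [hr]
      have hcount : ((∑ i ∈ Finset.range N, i : ℕ) : ℝ) = (N : ℝ) * ((N : ℝ) - 1) / 2 := by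
        have h2 := congrArg (fun m : ℕ => (m : ℝ)) (Finset.sum_range_id_mul_two N)
        simp only [Nat.cast_mul, Nat.cast_ofNat] at h2
        rw [Nat.cast_sub hN1', Nat.cast_one] at h2
        push_cast at h2 ⊢
        linarith
      have ht0 : 0 ≤ t ^ (2 * H * ((N : ℝ) - 1)) := Real.rpow_nonneg ht.1 _
      have hn0 : 0 ≤ (n : ℝ) ^ (-(2 - 2 * H)) := le_of_lt (Real.rpow_pos_of_pos hnpos _)
      have hNr : (0 : ℝ) ≤ (N : ℝ) := Nat.cast_nonneg N
      calc ∑ f ∈ Finset.univ.filter (fun f : Fin N → Fin n => ¬ Function.Injective f),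
            (∏ k : Fin N, bt (f k) - ∏ k : Fin N, bs (f k)) ^ 2
          ≤ ∑ f ∈ Finset.univ.filter (fun f : Fin N → Fin n => ¬ Function.Injective f),
            ∏ m : Fin N, (bt (f m) * bt (f m)) := step1
        _ ≤ ((∑ i ∈ Finset.range N, i : ℕ) : ℝ) * (M * (t ^ (2 * H)) ^ (N - 1 : ℕ)) := step2
        _ = (N : ℝ) * ((N : ℝ) - 1) / 2 * (4 * (cH H) ^ 2 * (n : ℝ) ^ (-(2 - 2 * H)) *
              t ^ (2 * H * ((N : ℝ) - 1))) := by
            rw [hcount, hMeq, hT]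
        _ ≤ 2 * (cH H) ^ 2 * (N : ℝ) ^ 2 * t ^ (2 * H * ((N : ℝ) - 1)) *
              (n : ℝ) ^ (-(2 - 2 * H)) := by
            nlinarith [mul_nonneg (mul_nonneg (mul_nonneg hNr (sq_nonneg (cH H))) ht0) hn0]
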